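/- Let H be a real Hilbert space with orthonormal basis (φ_p)_{p≥1}, let λ₁ > 0, and let (λ_p) satisfy λ_p ≥ λ₁ for all p. Let 0 < β < 1, t ≥ 0, and define, for φ, φ^ε, g, g^ε ∈ H, u^ε(t) − v^ε(t) = Σ_p [ (⟨φ−φ^ε, φ_p⟩ + ⟨g−g^ε, φ_p⟩/√λ_p) / (2β + 2e^{-√λ_p t}) + (e^{-√λ_p t}/2)(⟨φ−φ^ε, φ_p⟩ − ⟨g−g^ε, φ_p⟩/√λ_p) ] φ_p. If ‖φ−φ^ε‖ ≤ ε and ‖g−g^ε‖ ≤ ε, then ‖u^ε(t) − v^ε(t)‖ ≤ √(2(1 + 1/λ₁)) · ε/β. -/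

import Mathlib

open scoped RealInnerProductSpace

theorem stability_estimate {H : Type*} [NormedAddCommGroup H] [InnerProductSpace ℝ H]
    (φb : ℕ → H) (hφb : Orthonormal ℝ φb) (lam : ℕ → ℝ) (lam1 : ℝ)
    (hlam1 : 0 < lam1) (hlam : ∀ p, lam1 ≤ lam p)
    (β t ε : ℝ) (hβ0 : 0 < β) (hβ1 : β < 1) (ht : 0 ≤ t) (hε : 0 ≤ ε)
    (φv φε g gε d : H)
    (hφ : ‖φv - φε‖ ≤ ε) (hg : ‖g - gε‖ ≤ ε)
    (hd : HasSum (fun p : ℕ =>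
      ((⟪φv - φε, φb p⟫ + ⟪g - gε, φb p⟫ / Real.sqrt (lam p)) /
          (2 * β + 2 * Real.exp (-Real.sqrt (lam p) * t)) +
        (Real.exp (-Real.sqrt (lam p) * t) / 2) *
          (⟪φv - φε, φb p⟫ - ⟪g - gε, φb p⟫ / Real.sqrt (lam p))) • φb p) d) :
    ‖d‖ ≤ Real.sqrt (2 * (1 + 1 / lam1)) * ε / β := by
  set c : ℕ → ℝ := fun p =>
      (⟪φv - φε, φb p⟫ + ⟪g - gε, φb p⟫ / Real.sqrt (lam p)) /
          (2 * β + 2 * Real.exp (-Real.sqrt (lam p) * t)) +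
        (Real.exp (-Real.sqrt (lam p) * t) / 2) *
          (⟪φv - φε, φb p⟫ - ⟪g - gε, φb p⟫ / Real.sqrt (lam p)) with hc
  -- inner products recover the coefficients
  have hcoef : ∀ p, ⟪φb p, d⟫ = c p := by
    intro p
    have h1 : HasSum (fun q => ⟪φb p, c q • φb q⟫) ⟪φb p, d⟫ :=
      hd.mapL (innerSL ℝ (φb p))
    have hite := orthonormal_iff_ite.mp hφb
    have h2 : (fun q => ⟪φb p, c q • φb q⟫) = fun q => if q = p then c p else 0 := by
      funext q
      rw [real_inner_smul_right, hite p q]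
      by_cases hqp : q = p
      · subst hqp; simp
      · simp [hqp, Ne.symm hqp]
    rw [h2] at h1
    exact h1.unique (hasSum_ite_eq p (c p))
  -- ‖d‖² is the sum of squares
  have hsq : HasSum (fun p => c p ^ 2) (‖d‖ ^ 2) := by
    have h1 : HasSum (fun p => ⟪d, c p • φb p⟫) ⟪d, d⟫ := hd.mapL (innerSL ℝ d)
    have h2 : (fun p => ⟪d, c p • φb p⟫) = fun p => c p ^ 2 := by
      funext p
      rw [real_inner_smul_right, real_inner_comm, hcoef p, sq]
    rw [h2] at h1
    rwa [real_inner_self_eq_norm_sq] at h1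
  clear hcoef
  -- pointwise bound on coefficients
  have key : ∀ p, c p ^ 2 ≤
      2 / β ^ 2 * (⟪φv - φε, φb p⟫ ^ 2 + ⟪g - gε, φb p⟫ ^ 2 / lam1) := by
    intro p
    set A : ℝ := ⟪φv - φε, φb p⟫
    set G : ℝ := ⟪g - gε, φb p⟫
    set s : ℝ := Real.sqrt (lam p) with hs
    have hlp : (0:ℝ) < lam p := lt_of_lt_of_le hlam1 (hlam p)
    have hspos : 0 < s := Real.sqrt_pos.mpr hlp
    have hs2 : s ^ 2 = lam p := Real.sq_sqrt hlp.le
    set E : ℝ := Real.exp (-s * t) with hE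
    have hE0 : 0 < E := Real.exp_pos _
    have hE1 : E ≤ 1 := Real.exp_le_one_iff.mpr (by nlinarith [Real.sqrt_nonneg (lam p)])
    set B : ℝ := G / s with hB
    have hD : (0:ℝ) < 2 * β + 2 * E := by positivity
    have habs : |c p| ≤ (|A| + |B|) / β := by
      have h1 : |(A + B) / (2 * β + 2 * E)| ≤ (|A| + |B|) / (2 * β) := by
        rw [abs_div, abs_of_pos hD]
        exact div_le_div₀ (by positivity) (abs_add_le _ _) (by positivity) (by nlinarith)
      have h2 : |E / 2 * (A - B)| ≤ (|A| + |B|) / (2 * β) := by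
        rw [abs_mul, abs_of_pos (by positivity : (0:ℝ) < E / 2)]
        calc E / 2 * |A - B| ≤ 1 / 2 * (|A| + |B|) := by
              have := abs_sub A B
              nlinarith [abs_nonneg (A - B), abs_sub_abs_le_abs_sub A B, abs_sub A B]
          _ = (|A| + |B|) / 2 := by ring
          _ ≤ (|A| + |B|) / (2 * β) :=
              div_le_div_of_nonneg_left (by positivity) (by positivity) (by nlinarith)
      calc |c p| ≤ |(A + B) / (2 * β + 2 * E)| + |E / 2 * (A - B)| := abs_add_le _ _
        _ ≤ (|A| + |B|) / (2 * β) + (|A| + |B|) / (2 * β) := add_le_add h1 h2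
        _ = (|A| + |B|) / β := by field_simp; ring
    have hsq' : c p ^ 2 ≤ ((|A| + |B|) / β) ^ 2 := by
      rw [← sq_abs (c p)]
      exact pow_le_pow_left₀ (abs_nonneg _) habs 2
    have hB2 : B ^ 2 ≤ G ^ 2 / lam1 := by
      have : B ^ 2 = G ^ 2 / lam p := by rw [hB, div_pow, hs2]
      rw [this]
      exact div_le_div_of_nonneg_left (sq_nonneg G) hlam1 (hlam p)
    have h2ab : (|A| + |B|) ^ 2 ≤ 2 * (A ^ 2 + B ^ 2) := by
      nlinarith [sq_nonneg (|A| - |B|), sq_abs A, sq_abs B]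
    calc c p ^ 2 ≤ ((|A| + |B|) / β) ^ 2 := hsq'
      _ = (|A| + |B|) ^ 2 / β ^ 2 := by rw [div_pow]
      _ ≤ 2 * (A ^ 2 + B ^ 2) / β ^ 2 := by
          exact div_le_div_of_nonneg_right h2ab (by positivity) |>.trans_eq rfl
      _ ≤ 2 * (A ^ 2 + G ^ 2 / lam1) / β ^ 2 := by gcongr
      _ = 2 / β ^ 2 * (A ^ 2 + G ^ 2 / lam1) := by ring
  -- Bessel bounds
  have hSφ : Summable fun p => ‖⟪φb p, φv - φε⟫‖ ^ 2 := hφb.inner_products_summable _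
  have hSg : Summable fun p => ‖⟪φb p, g - gε⟫‖ ^ 2 := hφb.inner_products_summable _
  have hkey' : ∀ p, c p ^ 2 ≤
      2 / β ^ 2 * (‖⟪φb p, φv - φε⟫‖ ^ 2 + ‖⟪φb p, g - gε⟫‖ ^ 2 / lam1) := by
    intro p
    have := key p
    simpa [Real.norm_eq_abs, sq_abs, real_inner_comm] using this
  have hSB : Summable fun p =>
      2 / β ^ 2 * (‖⟪φb p, φv - φε⟫‖ ^ 2 + ‖⟪φb p, g - gε⟫‖ ^ 2 / lam1) :=
    ((hSφ.add (hSg.div_const lam1)).mul_left _)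
  have hnd : ‖d‖ ^ 2 ≤ 2 / β ^ 2 * (ε ^ 2 + ε ^ 2 / lam1) := by
    have h1 : ‖d‖ ^ 2 ≤ ∑' p, 2 / β ^ 2 *
        (‖⟪φb p, φv - φε⟫‖ ^ 2 + ‖⟪φb p, g - gε⟫‖ ^ 2 / lam1) := by
      rw [← hsq.tsum_eq]
      exact Summable.tsum_le_tsum hkey' hsq.summable hSB
    have h2 : ∑' p, 2 / β ^ 2 *
        (‖⟪φb p, φv - φε⟫‖ ^ 2 + ‖⟪φb p, g - gε⟫‖ ^ 2 / lam1)
        ≤ 2 / β ^ 2 * (ε ^ 2 + ε ^ 2 / lam1) := by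
      rw [tsum_mul_left, Summable.tsum_add hSφ (hSg.div_const lam1), tsum_div_const]
      have bφ : ∑' p, ‖⟪φb p, φv - φε⟫‖ ^ 2 ≤ ε ^ 2 :=
        (hφb.tsum_inner_products_le _).trans (pow_le_pow_left₀ (norm_nonneg _) hφ 2)
      have bg : ∑' p, ‖⟪φb p, g - gε⟫‖ ^ 2 ≤ ε ^ 2 :=
        (hφb.tsum_inner_products_le _).trans (pow_le_pow_left₀ (norm_nonneg _) hg 2)
      have hg0 : (0:ℝ) ≤ ∑' p, ‖⟪φb p, g - gε⟫‖ ^ 2 := tsum_nonneg fun _ => by positivity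
      gcongr
    exact h1.trans h2
  -- conclude
  have hrhs0 : 0 ≤ Real.sqrt (2 * (1 + 1 / lam1)) * ε / β := by positivity
  have hrhs2 : (Real.sqrt (2 * (1 + 1 / lam1)) * ε / β) ^ 2
      = 2 / β ^ 2 * (ε ^ 2 + ε ^ 2 / lam1) := by
    rw [div_pow, mul_pow, Real.sq_sqrt (by positivity)]
    field_simp
  nlinarith [norm_nonneg d, hnd, hrhs0, hrhs2]
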